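/- Let k > 0, y > 0 and let τ̃ : (0,∞) → (0,∞) be a continuous function such that τ/τ̃(τ) → 0 as τ → 0⁺. Then there exist constants C₀ > 0 and τ₀ > 0 such that for all τ ∈ (0, τ₀): | BS(k, y/τ̃(τ), τ) · k²√(2π) · (τ̃(τ)/τ)^{3/2} · y^{-3/2} · exp(k²τ̃(τ)/(2yτ) - k/2) - 1 | ≤ C₀ · τ/τ̃(τ). Equivalently, BS(k, y/τ̃(τ), τ) = (y^{3/2}/(k²√(2π)))·(τ/τ̃(τ))^{3/2}·exp(-k²τ̃(τ)/(2yτ) + k/2)·(1 + O(τ/τ̃(τ))) as τ → 0⁺. -/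

import Mathlib

/-- The standard normal cumulative distribution function. -/
noncomputable def Phi (x : ℝ) : ℝ :=
  ∫ s in Set.Iic x, Real.exp (-(s ^ 2) / 2) / Real.sqrt (2 * Real.pi)

/-- The Black–Scholes call price. -/
noncomputable def BS (k w T : ℝ) : ℝ :=
  Phi (-k / Real.sqrt (w * T) + Real.sqrt (w * T) / 2)
    - Real.exp k * Phi (-k / Real.sqrt (w * T) - Real.sqrt (w * T) / 2)

open Real MeasureTheory Filter Set

set_option maxHeartbeats 1000000

noncomputable def phi (x : ℝ) : ℝ := Real.exp (-(x ^ 2) / 2) / Real.sqrt (2 * Real.pi)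

lemma phi_pos (x : ℝ) : 0 < phi x := by
  unfold phi
  positivity

lemma phi_integrable : Integrable phi := by
  have h : Integrable (fun x : ℝ => Real.exp (-(1/2) * x ^ 2)) := integrable_exp_neg_mul_sq (by norm_num)
  have : phi = fun x => Real.exp (-(1/2) * x ^ 2) * (Real.sqrt (2 * Real.pi))⁻¹ := by
    funext x; unfold phi; ring_nf
  rw [this]
  exact h.mul_const _

lemma phi_continuous : Continuous phi := by
  unfold phi
  fun_prop

lemma hasDerivAt_phi (x : ℝ) : HasDerivAt phi (-x * phi x) x := by
  unfold phi
  have h1 : HasDerivAt (fun x : ℝ => -(x ^ 2) / 2) (-x) x := by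
    have := (hasDerivAt_pow 2 x).neg.div_const 2
    refine this.congr_deriv ?_; ring
  have h2 := (h1.exp).div_const (Real.sqrt (2 * Real.pi))
  refine h2.congr_deriv ?_
  ring

lemma Phi_eq (x : ℝ) : Phi x = ∫ s in Set.Iic x, phi s := rfl

lemma Phi_sub_Phi (a b : ℝ) : Phi b - Phi a = ∫ s in a..b, phi s := by
  rw [Phi_eq, Phi_eq]
  rw [← intervalIntegral.integral_Iic_sub_Iic (phi_integrable.integrableOn) (phi_integrable.integrableOn)]

lemma hasDerivAt_Phi (x : ℝ) : HasDerivAt Phi (phi x) x := by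
  have key : ∀ z : ℝ, Phi z = Phi 0 + ∫ s in (0:ℝ)..z, phi s := by
    intro z
    rw [← Phi_sub_Phi 0 z]; ring
  have h : HasDerivAt (fun z => Phi 0 + ∫ s in (0:ℝ)..z, phi s) (phi x) x := by
    apply HasDerivAt.const_add
    apply intervalIntegral.integral_hasDerivAt_right
    · exact phi_integrable.intervalIntegrable
    · exact phi_continuous.stronglyMeasurableAtFilter _ _
    · exact phi_continuous.continuousAt
  have : Phi = fun z => Phi 0 + ∫ s in (0:ℝ)..z, phi s := funext key
  rw [this]
  exact h

lemma Phi_tendsto_atBot : Tendsto Phi atBot (nhds 0) := by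
  have h := MeasureTheory.intervalIntegral_tendsto_integral_Iic (μ := volume) (0:ℝ)
    (phi_integrable.integrableOn) tendsto_id
  have h2 : Tendsto (fun a : ℝ => Phi 0 - ∫ s in a..(0:ℝ), phi s) atBot
      (nhds (Phi 0 - ∫ s in Set.Iic (0:ℝ), phi s)) := (tendsto_const_nhds.sub h)
  have : (fun a : ℝ => Phi 0 - ∫ s in a..(0:ℝ), phi s) = Phi := by
    funext a
    rw [← Phi_sub_Phi a 0]; ring
  rw [this] at h2
  simpa [Phi_eq] using h2

lemma phi_even (x : ℝ) : phi (-x) = phi x := by unfold phi; rw [neg_pow]; norm_num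

lemma phi_tendsto_atTop : Tendsto phi atTop (nhds 0) := by
  have h1 : Tendsto (fun x : ℝ => -(x ^ 2) / 2) atTop atBot := by
    apply Tendsto.atBot_div_const (by norm_num)
    exact Filter.tendsto_neg_atBot_iff.mpr (tendsto_pow_atTop (by norm_num))
  have h2 := (Real.tendsto_exp_atBot.comp h1).div_const (Real.sqrt (2 * Real.pi))
  have he : phi = (fun a => (Real.exp ∘ fun x : ℝ => -(x ^ 2) / 2) a / Real.sqrt (2 * Real.pi)) := rfl
  rw [he]
  simpa using h2

lemma tendsto_Phi_neg_atTop : Tendsto (fun x => Phi (-x)) atTop (nhds 0) :=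
  Phi_tendsto_atBot.comp tendsto_neg_atTop_atBot

lemma hasDerivAt_Phi_neg (x : ℝ) : HasDerivAt (fun x => Phi (-x)) (-phi x) x := by
  have h := (hasDerivAt_Phi (-x)).comp x (hasDerivAt_neg x)
  simp [phi_even] at h
  exact h

lemma hasDerivAt_q3 (x : ℝ) (hx : x ≠ 0) :
    HasDerivAt (fun x => phi x * (x⁻¹ - (x ^ 3)⁻¹)) (phi x * (3 * (x ^ 4)⁻¹ - 1)) x := by
  have hp : HasDerivAt (fun x : ℝ => x⁻¹ - (x ^ 3)⁻¹) (-(x ^ 2)⁻¹ + 3 * (x ^ 4)⁻¹) x := by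
    have h1 : HasDerivAt (fun x : ℝ => x⁻¹) (-(x ^ 2)⁻¹) x := by
      simpa using hasDerivAt_inv hx
    have h2 : HasDerivAt (fun x : ℝ => (x ^ 3)⁻¹) (-(3 * x ^ 2) / (x ^ 3) ^ 2) x :=
      (hasDerivAt_pow 3 x).inv (pow_ne_zero 3 hx)
    have := h1.sub h2
    refine this.congr_deriv ?_
    field_simp
    ring
  have := (hasDerivAt_phi x).mul hp
  refine this.congr_deriv ?_
  field_simp
  ring

lemma hasDerivAt_q5 (x : ℝ) (hx : x ≠ 0) :
    HasDerivAt (fun x => phi x * (x⁻¹ - (x ^ 3)⁻¹ + 3 * (x ^ 5)⁻¹))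
      (phi x * (-1 - 15 * (x ^ 6)⁻¹)) x := by
  have hp : HasDerivAt (fun x : ℝ => x⁻¹ - (x ^ 3)⁻¹ + 3 * (x ^ 5)⁻¹)
      (-(x ^ 2)⁻¹ + 3 * (x ^ 4)⁻¹ - 15 * (x ^ 6)⁻¹) x := by
    have h1 : HasDerivAt (fun x : ℝ => x⁻¹) (-(x ^ 2)⁻¹) x := by
      simpa using hasDerivAt_inv hx
    have h2 : HasDerivAt (fun x : ℝ => (x ^ 3)⁻¹) (-(3 * x ^ 2) / (x ^ 3) ^ 2) x :=
      (hasDerivAt_pow 3 x).inv (pow_ne_zero 3 hx)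
    have h3 : HasDerivAt (fun x : ℝ => (x ^ 5)⁻¹) (-(5 * x ^ 4) / (x ^ 5) ^ 2) x :=
      (hasDerivAt_pow 5 x).inv (pow_ne_zero 5 hx)
    have := (h1.sub h2).add (h3.const_mul 3)
    refine this.congr_deriv ?_
    field_simp
    ring
  have := (hasDerivAt_phi x).mul hp
  refine this.congr_deriv ?_
  field_simp
  ring

lemma tendsto_inv_pow_atTop (n : ℕ) (hn : 1 ≤ n) :
    Tendsto (fun x : ℝ => (x ^ n)⁻¹) atTop (nhds 0) :=
  (tendsto_pow_atTop (Nat.one_le_iff_ne_zero.mp hn)).inv_tendsto_atTop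

lemma mills_lower (x : ℝ) (hx : 0 < x) : phi x * (x⁻¹ - (x ^ 3)⁻¹) ≤ Phi (-x) := by
  set h : ℝ → ℝ := fun x => Phi (-x) - phi x * (x⁻¹ - (x ^ 3)⁻¹) with hh
  have hderiv : ∀ y ∈ Set.Ioi (0:ℝ), HasDerivAt h (-phi y - phi y * (3 * (y ^ 4)⁻¹ - 1)) y :=
    fun y hy => (hasDerivAt_Phi_neg y).sub (hasDerivAt_q3 y (ne_of_gt hy))
  have hanti : StrictAntiOn h (Set.Ioi 0) := by
    apply StrictAntiOn.mono (s := Set.Ioi 0) ?_ le_rfl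
    apply strictAntiOn_of_deriv_neg (convex_Ioi 0)
    · exact fun y hy => ((hderiv y hy).continuousAt).continuousWithinAt
    · intro y hy
      rw [interior_Ioi] at hy
      have hy' : (0:ℝ) < y := hy
      rw [(hderiv y hy).deriv]
      have := phi_pos y
      have hy4 : (0:ℝ) < (y ^ 4)⁻¹ := by positivity
      nlinarith
  have htend : Tendsto h atTop (nhds 0) := by
    have h1 : Tendsto (fun x : ℝ => x⁻¹ - (x ^ 3)⁻¹) atTop (nhds 0) := by
      simpa using tendsto_inv_atTop_zero.sub (tendsto_inv_pow_atTop 3 (by norm_num))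
    have h2 := phi_tendsto_atTop.mul h1
    simpa [hh] using tendsto_Phi_neg_atTop.sub h2
  have h0 : 0 ≤ h x := by
    apply le_of_tendsto htend
    filter_upwards [eventually_gt_atTop x] with y hy
    exact (hanti hx (lt_trans hx hy) hy).le
  simpa [hh] using h0

lemma mills_upper (x : ℝ) (hx : 0 < x) :
    Phi (-x) ≤ phi x * (x⁻¹ - (x ^ 3)⁻¹ + 3 * (x ^ 5)⁻¹) := by
  set h : ℝ → ℝ := fun x => phi x * (x⁻¹ - (x ^ 3)⁻¹ + 3 * (x ^ 5)⁻¹) - Phi (-x) with hh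
  have hderiv : ∀ y ∈ Set.Ioi (0:ℝ), HasDerivAt h (phi y * (-1 - 15 * (y ^ 6)⁻¹) - -phi y) y :=
    fun y hy => (hasDerivAt_q5 y (ne_of_gt hy)).sub (hasDerivAt_Phi_neg y)
  have hanti : StrictAntiOn h (Set.Ioi 0) := by
    apply strictAntiOn_of_deriv_neg (convex_Ioi 0)
    · exact fun y hy => ((hderiv y hy).continuousAt).continuousWithinAt
    · intro y hy
      rw [interior_Ioi] at hy
      have hy' : (0:ℝ) < y := hy
      rw [(hderiv y hy).deriv]
      have := phi_pos y
      have hy6 : (0:ℝ) < (y ^ 6)⁻¹ := by positivity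
      nlinarith
  have htend : Tendsto h atTop (nhds 0) := by
    have h1 : Tendsto (fun x : ℝ => x⁻¹ - (x ^ 3)⁻¹ + 3 * (x ^ 5)⁻¹) atTop (nhds 0) := by
      have := (tendsto_inv_atTop_zero.sub (tendsto_inv_pow_atTop 3 (by norm_num))).add
        ((tendsto_inv_pow_atTop 5 (by norm_num)).const_mul 3)
      simpa using this
    have h2 := phi_tendsto_atTop.mul h1
    simpa [hh] using h2.sub tendsto_Phi_neg_atTop
  have h0 : 0 ≤ h x := by
    apply le_of_tendsto htend
    filter_upwards [eventually_gt_atTop x] with y hy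
    exact (hanti hx (lt_trans hx hy) hy).le
  simpa [hh] using h0

section Sandwich

variable (k s : ℝ)

lemma basic_facts (hk : 0 < k) (hs : 0 < s) (h2 : s ^ 2 ≤ k) :
    0 < k / s - s / 2 ∧ 0 < k / s + s / 2 := by
  constructor
  · rw [div_sub_div _ _ (ne_of_gt hs) two_ne_zero]
    apply div_pos (by nlinarith) (by positivity)
  · positivity

lemma exp_ident_p (hk : 0 < k) (hs : 0 < s) :
    Real.exp (-((k / s - s / 2) ^ 2) / 2) * Real.exp (k ^ 2 / (2 * s ^ 2) - k / 2)
      = Real.exp (-s ^ 2 / 8) := by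
  rw [← Real.exp_add]
  congr 1
  have hs0 : s ≠ 0 := ne_of_gt hs
  field_simp
  ring

lemma exp_ident_m (hk : 0 < k) (hs : 0 < s) :
    Real.exp k * Real.exp (-((k / s + s / 2) ^ 2) / 2) * Real.exp (k ^ 2 / (2 * s ^ 2) - k / 2)
      = Real.exp (-s ^ 2 / 8) := by
  rw [← Real.exp_add, ← Real.exp_add]
  congr 1
  have hs0 : s ≠ 0 := ne_of_gt hs
  field_simp
  ring

lemma g_ident_p (hk : 0 < k) (hs : 0 < s) :
    phi (k / s - s / 2) * (k ^ 2 * Real.sqrt (2 * Real.pi) * (s ^ 3)⁻¹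
        * Real.exp (k ^ 2 / (2 * s ^ 2) - k / 2))
      = Real.exp (-s ^ 2 / 8) * (k ^ 2 / s ^ 3) := by
  have hπ0 : Real.sqrt (2 * Real.pi) ≠ 0 := ne_of_gt (Real.sqrt_pos.mpr (by positivity))
  unfold phi
  rw [show Real.exp (-((k / s - s / 2) ^ 2) / 2) / Real.sqrt (2 * Real.pi)
        * (k ^ 2 * Real.sqrt (2 * Real.pi) * (s ^ 3)⁻¹ * Real.exp (k ^ 2 / (2 * s ^ 2) - k / 2))
      = (Real.exp (-((k / s - s / 2) ^ 2) / 2) * Real.exp (k ^ 2 / (2 * s ^ 2) - k / 2))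
        * (k ^ 2 * (s ^ 3)⁻¹) * (Real.sqrt (2 * Real.pi) / Real.sqrt (2 * Real.pi)) from by ring,
    div_self hπ0, mul_one, exp_ident_p k s hk hs]
  ring

lemma g_ident_m (hk : 0 < k) (hs : 0 < s) :
    Real.exp k * phi (k / s + s / 2) * (k ^ 2 * Real.sqrt (2 * Real.pi) * (s ^ 3)⁻¹
        * Real.exp (k ^ 2 / (2 * s ^ 2) - k / 2))
      = Real.exp (-s ^ 2 / 8) * (k ^ 2 / s ^ 3) := by
  have hπ0 : Real.sqrt (2 * Real.pi) ≠ 0 := ne_of_gt (Real.sqrt_pos.mpr (by positivity))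
  unfold phi
  rw [show Real.exp k * (Real.exp (-((k / s + s / 2) ^ 2) / 2) / Real.sqrt (2 * Real.pi))
        * (k ^ 2 * Real.sqrt (2 * Real.pi) * (s ^ 3)⁻¹ * Real.exp (k ^ 2 / (2 * s ^ 2) - k / 2))
      = (Real.exp k * Real.exp (-((k / s + s / 2) ^ 2) / 2)
          * Real.exp (k ^ 2 / (2 * s ^ 2) - k / 2))
        * (k ^ 2 * (s ^ 3)⁻¹) * (Real.sqrt (2 * Real.pi) / Real.sqrt (2 * Real.pi)) from by ring,
    div_self hπ0, mul_one, exp_ident_m k s hk hs]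
  ring

lemma alg_up (hk : 0 < k) (hs : 0 < s) (h2 : s ^ 2 ≤ k) :
    (k ^ 2 / s ^ 3) * (((k / s - s / 2)⁻¹ - ((k / s - s / 2) ^ 3)⁻¹ + 3 * ((k / s - s / 2) ^ 5)⁻¹)
        - ((k / s + s / 2)⁻¹ - ((k / s + s / 2) ^ 3)⁻¹))
      = 4 * k ^ 2 / ((2 * k - s ^ 2) * (2 * k + s ^ 2))
        - 16 * k ^ 2 * s ^ 2 * (12 * k ^ 2 + s ^ 4) / (((2 * k - s ^ 2) * (2 * k + s ^ 2)) ^ 3)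
        + 96 * k ^ 2 * s ^ 2 / (2 * k - s ^ 2) ^ 5 := by
  obtain ⟨hxp, hxm⟩ := basic_facts k s hk hs h2
  have hs0 : s ≠ 0 := ne_of_gt hs
  have hxp0 : k / s - s / 2 ≠ 0 := ne_of_gt hxp
  have hxm0 : k / s + s / 2 ≠ 0 := ne_of_gt hxm
  have ha0 : 2 * k - s ^ 2 ≠ 0 := by nlinarith
  have hb0 : 2 * k + s ^ 2 ≠ 0 := by positivity
  have e1 : k / s - s / 2 = (2 * k - s ^ 2) / (2 * s) := by field_simp
  have e2 : k / s + s / 2 = (2 * k + s ^ 2) / (2 * s) := by field_simp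
  rw [e1, e2, div_pow, div_pow, div_pow, inv_div, inv_div, inv_div, inv_div, inv_div]
  have ha0' : k * 2 - s ^ 2 ≠ 0 := by nlinarith
  have hb0' : k * 2 + s ^ 2 ≠ 0 := by positivity
  field_simp
  ring

lemma alg_lo (hk : 0 < k) (hs : 0 < s) (h2 : s ^ 2 ≤ k) :
    (k ^ 2 / s ^ 3) * (((k / s - s / 2)⁻¹ - ((k / s - s / 2) ^ 3)⁻¹)
        - ((k / s + s / 2)⁻¹ - ((k / s + s / 2) ^ 3)⁻¹ + 3 * ((k / s + s / 2) ^ 5)⁻¹))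
      = 4 * k ^ 2 / ((2 * k - s ^ 2) * (2 * k + s ^ 2))
        - 16 * k ^ 2 * s ^ 2 * (12 * k ^ 2 + s ^ 4) / (((2 * k - s ^ 2) * (2 * k + s ^ 2)) ^ 3)
        - 96 * k ^ 2 * s ^ 2 / (2 * k + s ^ 2) ^ 5 := by
  obtain ⟨hxp, hxm⟩ := basic_facts k s hk hs h2
  have hs0 : s ≠ 0 := ne_of_gt hs
  have hxp0 : k / s - s / 2 ≠ 0 := ne_of_gt hxp
  have hxm0 : k / s + s / 2 ≠ 0 := ne_of_gt hxm
  have ha0 : 2 * k - s ^ 2 ≠ 0 := by nlinarith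
  have hb0 : 2 * k + s ^ 2 ≠ 0 := by positivity
  have e1 : k / s - s / 2 = (2 * k - s ^ 2) / (2 * s) := by field_simp
  have e2 : k / s + s / 2 = (2 * k + s ^ 2) / (2 * s) := by field_simp
  rw [e1, e2, div_pow, div_pow, div_pow, inv_div, inv_div, inv_div, inv_div, inv_div]
  have ha0' : k * 2 - s ^ 2 ≠ 0 := by nlinarith
  have hb0' : k * 2 + s ^ 2 ≠ 0 := by positivity
  field_simp
  ring

lemma sandwich_up (hk : 0 < k) (hs : 0 < s) (h2 : s ^ 2 ≤ k) :
    (Phi (-(k / s) + s / 2) - Real.exp k * Phi (-(k / s) - s / 2))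
        * (k ^ 2 * Real.sqrt (2 * Real.pi)) * (s ^ 3)⁻¹
        * Real.exp (k ^ 2 / (2 * s ^ 2) - k / 2)
      ≤ Real.exp (-s ^ 2 / 8)
        * (4 * k ^ 2 / ((2 * k - s ^ 2) * (2 * k + s ^ 2))
          - 16 * k ^ 2 * s ^ 2 * (12 * k ^ 2 + s ^ 4) / (((2 * k - s ^ 2) * (2 * k + s ^ 2)) ^ 3)
          + 96 * k ^ 2 * s ^ 2 / (2 * k - s ^ 2) ^ 5) := by
  obtain ⟨hxp, hxm⟩ := basic_facts k s hk hs h2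
  have hargp : -(k / s) + s / 2 = -(k / s - s / 2) := by ring
  have hargm : -(k / s) - s / 2 = -(k / s + s / 2) := by ring
  rw [hargp, hargm]
  have hcE_pos : 0 < k ^ 2 * Real.sqrt (2 * Real.pi) * (s ^ 3)⁻¹
      * Real.exp (k ^ 2 / (2 * s ^ 2) - k / 2) := by
    have : (0:ℝ) < Real.sqrt (2 * Real.pi) := Real.sqrt_pos.mpr (by positivity)
    positivity
  have step1 : (Phi (-(k / s - s / 2)) - Real.exp k * Phi (-(k / s + s / 2)))
      * (k ^ 2 * Real.sqrt (2 * Real.pi) * (s ^ 3)⁻¹ * Real.exp (k ^ 2 / (2 * s ^ 2) - k / 2))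
      ≤ (phi (k / s - s / 2) * ((k / s - s / 2)⁻¹ - ((k / s - s / 2) ^ 3)⁻¹
            + 3 * ((k / s - s / 2) ^ 5)⁻¹)
          - Real.exp k * (phi (k / s + s / 2) * ((k / s + s / 2)⁻¹ - ((k / s + s / 2) ^ 3)⁻¹)))
      * (k ^ 2 * Real.sqrt (2 * Real.pi) * (s ^ 3)⁻¹ * Real.exp (k ^ 2 / (2 * s ^ 2) - k / 2)) := by
    apply mul_le_mul_of_nonneg_right _ (le_of_lt hcE_pos)
    apply sub_le_sub (mills_upper _ hxp)
    exact mul_le_mul_of_nonneg_left (mills_lower _ hxm) (Real.exp_nonneg k)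
  have step2 : (phi (k / s - s / 2) * ((k / s - s / 2)⁻¹ - ((k / s - s / 2) ^ 3)⁻¹
            + 3 * ((k / s - s / 2) ^ 5)⁻¹)
          - Real.exp k * (phi (k / s + s / 2) * ((k / s + s / 2)⁻¹ - ((k / s + s / 2) ^ 3)⁻¹)))
      * (k ^ 2 * Real.sqrt (2 * Real.pi) * (s ^ 3)⁻¹ * Real.exp (k ^ 2 / (2 * s ^ 2) - k / 2))
      = Real.exp (-s ^ 2 / 8) * ((k ^ 2 / s ^ 3)
          * (((k / s - s / 2)⁻¹ - ((k / s - s / 2) ^ 3)⁻¹ + 3 * ((k / s - s / 2) ^ 5)⁻¹)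
            - ((k / s + s / 2)⁻¹ - ((k / s + s / 2) ^ 3)⁻¹))) := by
    linear_combination
      (((k / s - s / 2)⁻¹ - ((k / s - s / 2) ^ 3)⁻¹ + 3 * ((k / s - s / 2) ^ 5)⁻¹))
          * g_ident_p k s hk hs
        - ((k / s + s / 2)⁻¹ - ((k / s + s / 2) ^ 3)⁻¹) * g_ident_m k s hk hs
  calc (Phi (-(k / s - s / 2)) - Real.exp k * Phi (-(k / s + s / 2)))
        * (k ^ 2 * Real.sqrt (2 * Real.pi)) * (s ^ 3)⁻¹
        * Real.exp (k ^ 2 / (2 * s ^ 2) - k / 2)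
      = (Phi (-(k / s - s / 2)) - Real.exp k * Phi (-(k / s + s / 2)))
        * (k ^ 2 * Real.sqrt (2 * Real.pi) * (s ^ 3)⁻¹
          * Real.exp (k ^ 2 / (2 * s ^ 2) - k / 2)) := by ring
    _ ≤ _ := step1
    _ = _ := step2
    _ = _ := by rw [alg_up k s hk hs h2]

lemma sandwich_lo (hk : 0 < k) (hs : 0 < s) (h2 : s ^ 2 ≤ k) :
    Real.exp (-s ^ 2 / 8)
        * (4 * k ^ 2 / ((2 * k - s ^ 2) * (2 * k + s ^ 2))
          - 16 * k ^ 2 * s ^ 2 * (12 * k ^ 2 + s ^ 4) / (((2 * k - s ^ 2) * (2 * k + s ^ 2)) ^ 3)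
          - 96 * k ^ 2 * s ^ 2 / (2 * k + s ^ 2) ^ 5)
      ≤ (Phi (-(k / s) + s / 2) - Real.exp k * Phi (-(k / s) - s / 2))
        * (k ^ 2 * Real.sqrt (2 * Real.pi)) * (s ^ 3)⁻¹
        * Real.exp (k ^ 2 / (2 * s ^ 2) - k / 2) := by
  obtain ⟨hxp, hxm⟩ := basic_facts k s hk hs h2
  have hargp : -(k / s) + s / 2 = -(k / s - s / 2) := by ring
  have hargm : -(k / s) - s / 2 = -(k / s + s / 2) := by ring
  rw [hargp, hargm]
  have hcE_pos : 0 < k ^ 2 * Real.sqrt (2 * Real.pi) * (s ^ 3)⁻¹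
      * Real.exp (k ^ 2 / (2 * s ^ 2) - k / 2) := by
    have : (0:ℝ) < Real.sqrt (2 * Real.pi) := Real.sqrt_pos.mpr (by positivity)
    positivity
  have step1 : (phi (k / s - s / 2) * ((k / s - s / 2)⁻¹ - ((k / s - s / 2) ^ 3)⁻¹)
          - Real.exp k * (phi (k / s + s / 2) * ((k / s + s / 2)⁻¹ - ((k / s + s / 2) ^ 3)⁻¹
            + 3 * ((k / s + s / 2) ^ 5)⁻¹)))
      * (k ^ 2 * Real.sqrt (2 * Real.pi) * (s ^ 3)⁻¹ * Real.exp (k ^ 2 / (2 * s ^ 2) - k / 2))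
      ≤ (Phi (-(k / s - s / 2)) - Real.exp k * Phi (-(k / s + s / 2)))
      * (k ^ 2 * Real.sqrt (2 * Real.pi) * (s ^ 3)⁻¹ * Real.exp (k ^ 2 / (2 * s ^ 2) - k / 2)) := by
    apply mul_le_mul_of_nonneg_right _ (le_of_lt hcE_pos)
    apply sub_le_sub (mills_lower _ hxp)
    exact mul_le_mul_of_nonneg_left (mills_upper _ hxm) (Real.exp_nonneg k)
  have step2 : (phi (k / s - s / 2) * ((k / s - s / 2)⁻¹ - ((k / s - s / 2) ^ 3)⁻¹)
          - Real.exp k * (phi (k / s + s / 2) * ((k / s + s / 2)⁻¹ - ((k / s + s / 2) ^ 3)⁻¹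
            + 3 * ((k / s + s / 2) ^ 5)⁻¹)))
      * (k ^ 2 * Real.sqrt (2 * Real.pi) * (s ^ 3)⁻¹ * Real.exp (k ^ 2 / (2 * s ^ 2) - k / 2))
      = Real.exp (-s ^ 2 / 8) * ((k ^ 2 / s ^ 3)
          * (((k / s - s / 2)⁻¹ - ((k / s - s / 2) ^ 3)⁻¹)
            - ((k / s + s / 2)⁻¹ - ((k / s + s / 2) ^ 3)⁻¹ + 3 * ((k / s + s / 2) ^ 5)⁻¹))) := by
    linear_combination
      (((k / s - s / 2)⁻¹ - ((k / s - s / 2) ^ 3)⁻¹)) * g_ident_p k s hk hs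
        - ((k / s + s / 2)⁻¹ - ((k / s + s / 2) ^ 3)⁻¹ + 3 * ((k / s + s / 2) ^ 5)⁻¹)
          * g_ident_m k s hk hs
  calc Real.exp (-s ^ 2 / 8)
        * (4 * k ^ 2 / ((2 * k - s ^ 2) * (2 * k + s ^ 2))
          - 16 * k ^ 2 * s ^ 2 * (12 * k ^ 2 + s ^ 4) / (((2 * k - s ^ 2) * (2 * k + s ^ 2)) ^ 3)
          - 96 * k ^ 2 * s ^ 2 / (2 * k + s ^ 2) ^ 5)
      = Real.exp (-s ^ 2 / 8) * ((k ^ 2 / s ^ 3)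
          * (((k / s - s / 2)⁻¹ - ((k / s - s / 2) ^ 3)⁻¹)
            - ((k / s + s / 2)⁻¹ - ((k / s + s / 2) ^ 3)⁻¹ + 3 * ((k / s + s / 2) ^ 5)⁻¹))) := by
        rw [alg_lo k s hk hs h2]
    _ = _ := step2.symm
    _ ≤ _ := step1
    _ = _ := by ring

end Sandwich

set_option maxHeartbeats 4000000 in
lemma core (k s : ℝ) (hk : 0 < k) (hs : 0 < s) (h1 : s ^ 2 ≤ 1) (h2 : s ^ 2 ≤ k)
    (h3 : 32 * s ^ 2 ≤ k ^ 2) (h4 : 400 * s ^ 2 ≤ k ^ 3) :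
    |(Phi (-(k / s) + s / 2) - Real.exp k * Phi (-(k / s) - s / 2))
        * (k ^ 2 * Real.sqrt (2 * Real.pi)) * (s ^ 3)⁻¹
        * Real.exp (k ^ 2 / (2 * s ^ 2) - k / 2) - 1|
      ≤ (1 + 1 / k + 8 / k ^ 2 + 96 / k ^ 3) * s ^ 2 := by
  have hup := sandwich_up k s hk hs h2
  have hlo := sandwich_lo k s hk hs h2
  set F : ℝ := (Phi (-(k / s) + s / 2) - Real.exp k * Phi (-(k / s) - s / 2))
      * (k ^ 2 * Real.sqrt (2 * Real.pi)) * (s ^ 3)⁻¹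
      * Real.exp (k ^ 2 / (2 * s ^ 2) - k / 2) with hF_def
  set E : ℝ := Real.exp (-s ^ 2 / 8) with hE_def
  have hE0 : 0 < E := Real.exp_pos _
  have hE1 : E ≤ 1 := by
    rw [hE_def, ← Real.exp_zero]
    exact Real.exp_le_exp.mpr (by nlinarith)
  have hE2 : 1 - s ^ 2 / 8 ≤ E := by
    have := Real.add_one_le_exp (-s ^ 2 / 8)
    rw [hE_def]; linarith
  set a : ℝ := 2 * k - s ^ 2 with ha_def
  set b : ℝ := 2 * k + s ^ 2 with hb_def
  have ha_pos : 0 < a := by rw [ha_def]; nlinarith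
  have hb_pos : 0 < b := by rw [hb_def]; positivity
  have ha_ge : k ≤ a := by rw [ha_def]; nlinarith
  have hb_ge : k ≤ b := by rw [hb_def]; nlinarith
  have hab_eq : a * b = 4 * k ^ 2 - s ^ 4 := by rw [ha_def, hb_def]; ring
  set A1 : ℝ := 4 * k ^ 2 / (a * b) with hA1_def
  set B1 : ℝ := 16 * k ^ 2 * s ^ 2 * (12 * k ^ 2 + s ^ 4) / (a * b) ^ 3 with hB1_def
  set C1 : ℝ := 96 * k ^ 2 * s ^ 2 / a ^ 5 with hC1_def
  set C2 : ℝ := 96 * k ^ 2 * s ^ 2 / b ^ 5 with hC2_def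
  clear_value F E a b A1 B1 C1 C2
  clear hF_def hE_def
  have hab_pos : 0 < a * b := mul_pos ha_pos hb_pos
  have hab_lb : 3 * k ^ 2 ≤ a * b := by rw [hab_eq]; nlinarith
  have hab_ub : a * b ≤ 4 * k ^ 2 := by rw [hab_eq]; nlinarith
  have hA1_lb : 1 ≤ A1 := by
    rw [hA1_def, le_div_iff₀ hab_pos]; nlinarith
  have hA1_ub : A1 ≤ 1 + s ^ 2 / (3 * k) := by
    have e1 : A1 = 1 + s ^ 4 / (a * b) := by
      rw [hA1_def, hab_eq]
      have : 4 * k ^ 2 - s ^ 4 ≠ 0 := by nlinarith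
      field_simp
      ring
    have e2 : s ^ 4 / (a * b) ≤ s ^ 2 * k / (3 * k ^ 2) :=
      div_le_div₀ (by positivity) (by nlinarith) (by positivity) hab_lb
    have e3 : s ^ 2 * k / (3 * k ^ 2) = s ^ 2 / (3 * k) := by
      field_simp
    rw [e1]
    rw [e3] at e2
    linarith
  have hA1_ub' : A1 ≤ 1 + 1 / 3 := by
    have : s ^ 2 / (3 * k) ≤ 1 / 3 := by
      rw [div_le_div_iff₀ (by positivity) (by norm_num)]; nlinarith
    linarith
  have hB1_lb : 0 ≤ B1 := by
    rw [hB1_def]; positivity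
  have hB1_ub : B1 ≤ 8 * s ^ 2 / k ^ 2 := by
    rw [hB1_def]
    have hd : (0:ℝ) < (a * b) ^ 3 := by positivity
    rw [div_le_div_iff₀ hd (by positivity)]
    have hs4 : s ^ 4 ≤ k ^ 2 := by nlinarith
    have e1 : (3 * k ^ 2) ^ 3 ≤ (a * b) ^ 3 := pow_le_pow_left₀ (by positivity) hab_lb 3
    have e2 : 8 * s ^ 2 * (3 * k ^ 2) ^ 3 ≤ 8 * s ^ 2 * (a * b) ^ 3 :=
      mul_le_mul_of_nonneg_left e1 (by positivity)
    nlinarith [mul_nonneg (mul_nonneg (show (0:ℝ) ≤ 16 * k ^ 4 by positivity) (sq_nonneg s))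
        (sub_nonneg.mpr hs4),
      mul_nonneg (pow_nonneg hk.le 6) (sq_nonneg s)]
  have hB14 : B1 ≤ 1 / 4 := by
    have : 8 * s ^ 2 / k ^ 2 ≤ 1 / 4 := by
      rw [div_le_div_iff₀ (by positivity) (by norm_num)]; nlinarith
    linarith
  have hC1_lb : 0 ≤ C1 := by rw [hC1_def]; positivity
  have hC1_ub : C1 ≤ 96 * s ^ 2 / k ^ 3 := by
    have e1 : C1 ≤ 96 * k ^ 2 * s ^ 2 / k ^ 5 := by
      rw [hC1_def]
      exact div_le_div_of_nonneg_left (by positivity) (by positivity)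
        (pow_le_pow_left₀ hk.le ha_ge 5)
    have e2 : 96 * k ^ 2 * s ^ 2 / k ^ 5 = 96 * s ^ 2 / k ^ 3 := by
      field_simp
    linarith [e1, e2.symm.le]
  have hC2_lb : 0 ≤ C2 := by rw [hC2_def]; positivity
  have hC2_ub : C2 ≤ 96 * s ^ 2 / k ^ 3 := by
    have e1 : C2 ≤ 96 * k ^ 2 * s ^ 2 / k ^ 5 := by
      rw [hC2_def]
      exact div_le_div_of_nonneg_left (by positivity) (by positivity)
        (pow_le_pow_left₀ hk.le hb_ge 5)
    have e2 : 96 * k ^ 2 * s ^ 2 / k ^ 5 = 96 * s ^ 2 / k ^ 3 := by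
      field_simp
    linarith [e1, e2.symm.le]
  have hC14 : C1 ≤ 1 / 4 := by
    have : 96 * s ^ 2 / k ^ 3 ≤ 1 / 4 := by
      rw [div_le_div_iff₀ (by positivity) (by norm_num)]; nlinarith
    linarith
  have hC24 : C2 ≤ 1 / 4 := by
    have : 96 * s ^ 2 / k ^ 3 ≤ 1 / 4 := by
      rw [div_le_div_iff₀ (by positivity) (by norm_num)]; nlinarith
    linarith
  -- final assembly
  have hQu_nonneg : 0 ≤ A1 - B1 + C1 := by linarith
  have hQl_nonneg : 0 ≤ A1 - B1 - C2 := by linarith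
  have hQl_ub : A1 - B1 - C2 ≤ 2 := by linarith
  have hFu : F ≤ A1 - B1 + C1 := by nlinarith [mul_nonneg (sub_nonneg.mpr hE1) hQu_nonneg]
  have hFl : (A1 - B1 - C2) - s ^ 2 / 4 ≤ F := by
    nlinarith [mul_le_mul (by linarith : 1 - E ≤ s ^ 2 / 8) hQl_ub hQl_nonneg (by positivity)]
  rw [abs_le]
  have hm1 : 0 ≤ s ^ 2 / (3 * k) := by positivity
  have hm2 : 0 ≤ 8 * s ^ 2 / k ^ 2 := by positivity
  have hm3 : 0 ≤ 96 * s ^ 2 / k ^ 3 := by positivity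
  have hr1 : s ^ 2 / (3 * k) ≤ 1 / k * s ^ 2 := by
    rw [div_le_iff₀ (by positivity : (0:ℝ) < 3 * k)]
    have e : 1 / k * s ^ 2 * (3 * k) = 3 * s ^ 2 := by field_simp
    rw [e]
    nlinarith
  have hr2 : 8 * s ^ 2 / k ^ 2 = 8 / k ^ 2 * s ^ 2 := by ring
  have hr3 : 96 * s ^ 2 / k ^ 3 = 96 / k ^ 3 * s ^ 2 := by ring
  have hp1 : 0 ≤ 1 / k * s ^ 2 := by positivity
  have hp2 : 0 ≤ 8 / k ^ 2 * s ^ 2 := by positivity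
  have hp3 : 0 ≤ 96 / k ^ 3 * s ^ 2 := by positivity
  constructor
  · linarith [hFl, hA1_lb, hB1_ub, hC2_ub, hr2.le, hr3.le, sq_nonneg s]
  · linarith [hFu, hA1_ub, hB1_lb, hC1_ub, hr1, hr2.le, hr3.le, sq_nonneg s]

theorem stmt_2 (k y : ℝ) (hk : 0 < k) (hy : 0 < y)
    (τt : ℝ → ℝ) (hcont : ContinuousOn τt (Set.Ioi 0))
    (hpos : ∀ τ ∈ Set.Ioi (0 : ℝ), 0 < τt τ)
    (hlim : Filter.Tendsto (fun τ => τ / τt τ) (nhdsWithin 0 (Set.Ioi 0)) (nhds 0)) :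
    ∃ C₀ > (0 : ℝ), ∃ τ₀ > (0 : ℝ), ∀ τ ∈ Set.Ioo (0 : ℝ) τ₀,
      |BS k (y / τt τ) τ * (k ^ 2 * Real.sqrt (2 * Real.pi)) * (τt τ / τ) ^ ((3 : ℝ) / 2)
          * y ^ (-(3 : ℝ) / 2) * Real.exp (k ^ 2 * τt τ / (2 * y * τ) - k / 2) - 1|
        ≤ C₀ * (τ / τt τ) := by
  set m : ℝ := min 1 (min k (min (k ^ 2 / 32) (k ^ 3 / 400))) with hm_def
  have hm_pos : 0 < m := by
    rw [hm_def]
    have h1 : (0:ℝ) < k ^ 2 / 32 := by positivity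
    have h2 : (0:ℝ) < k ^ 3 / 400 := by positivity
    simp only [lt_min_iff]
    exact ⟨one_pos, hk, h1, h2⟩
  refine ⟨(1 + 1 / k + 8 / k ^ 2 + 96 / k ^ 3) * y, by positivity, ?_⟩
  have hev : ∀ᶠ τ in nhdsWithin 0 (Set.Ioi 0), τ / τt τ < m / y :=
    hlim.eventually (eventually_lt_nhds (by positivity))
  obtain ⟨u, hu, hsub⟩ := mem_nhdsGT_iff_exists_Ioo_subset.mp hev
  refine ⟨u, hu, ?_⟩
  intro τ hτ
  have hτ0 : 0 < τ := hτ.1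
  have ht : 0 < τt τ := hpos τ hτ0
  have ht0 : τt τ ≠ 0 := ne_of_gt ht
  have hτne : τ ≠ 0 := ne_of_gt hτ0
  have hy0 : y ≠ 0 := ne_of_gt hy
  have hratio : τ / τt τ < m / y := hsub hτ
  have hratio_pos : 0 < τ / τt τ := div_pos hτ0 ht
  have hv_lt : y * (τ / τt τ) < m := by
    have := mul_lt_mul_of_pos_left hratio hy
    rwa [mul_div_cancel₀ m hy0] at this
  -- set s
  have hbase_pos : 0 < y / τt τ * τ := by positivity
  set s : ℝ := Real.sqrt (y / τt τ * τ) with hs_def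
  have hs_pos : 0 < s := Real.sqrt_pos.mpr hbase_pos
  have hs2 : s ^ 2 = y / τt τ * τ := Real.sq_sqrt hbase_pos.le
  have hs2' : s ^ 2 = y * (τ / τt τ) := by rw [hs2]; ring
  have hsm : s ^ 2 < m := by rw [hs2']; exact hv_lt
  have h1 : s ^ 2 ≤ 1 := le_of_lt (lt_of_lt_of_le hsm (min_le_left _ _))
  have h2 : s ^ 2 ≤ k :=
    le_of_lt (lt_of_lt_of_le hsm ((min_le_right _ _).trans (min_le_left _ _)))
  have h3 : 32 * s ^ 2 ≤ k ^ 2 := by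
    have : s ^ 2 ≤ k ^ 2 / 32 := le_of_lt (lt_of_lt_of_le hsm
      ((min_le_right _ _).trans ((min_le_right _ _).trans (min_le_left _ _))))
    linarith
  have h4 : 400 * s ^ 2 ≤ k ^ 3 := by
    have : s ^ 2 ≤ k ^ 3 / 400 := le_of_lt (lt_of_lt_of_le hsm
      ((min_le_right _ _).trans ((min_le_right _ _).trans (min_le_right _ _))))
    linarith
  have hcore := core k s hk hs_pos h1 h2 h3 h4
  -- rewrite BS
  have hBS : BS k (y / τt τ) τ
      = Phi (-(k / s) + s / 2) - Real.exp k * Phi (-(k / s) - s / 2) := by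
    unfold BS
    rw [← hs_def]
    simp only [neg_div]
  -- exponent argument
  have hexp_arg : k ^ 2 * τt τ / (2 * y * τ) = k ^ 2 / (2 * s ^ 2) := by
    rw [hs2]
    field_simp
  -- power identity
  have hpow : (τt τ / τ) ^ ((3 : ℝ) / 2) * y ^ (-(3 : ℝ) / 2) = (s ^ 3)⁻¹ := by
    have h3pow : ((y / τt τ * τ) ^ ((1:ℝ)/2)) ^ (3:ℕ) = (y / τt τ * τ) ^ ((3:ℝ)/2) := by
      rw [← Real.rpow_natCast ((y / τt τ * τ) ^ ((1:ℝ)/2)) 3, ← Real.rpow_mul hbase_pos.le]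
      norm_num
    have hs3 : s ^ 3 = (y / τt τ * τ) ^ ((3:ℝ)/2) := by
      rw [hs_def, Real.sqrt_eq_rpow, h3pow]
    rw [hs3, ← Real.rpow_neg hbase_pos.le]
    have hyexp : y ^ (-(3 : ℝ) / 2) = (y⁻¹) ^ ((3:ℝ)/2) := by
      rw [Real.inv_rpow hy.le, ← Real.rpow_neg hy.le]
      norm_num
    rw [hyexp, ← Real.mul_rpow (by positivity) (by positivity)]
    have e : τt τ / τ * y⁻¹ = (y / τt τ * τ)⁻¹ := by
      field_simp
    rw [e, Real.inv_rpow hbase_pos.le, Real.rpow_neg hbase_pos.le]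
  -- assemble
  have hgoal_eq : BS k (y / τt τ) τ * (k ^ 2 * Real.sqrt (2 * Real.pi))
        * (τt τ / τ) ^ ((3 : ℝ) / 2) * y ^ (-(3 : ℝ) / 2)
        * Real.exp (k ^ 2 * τt τ / (2 * y * τ) - k / 2)
      = (Phi (-(k / s) + s / 2) - Real.exp k * Phi (-(k / s) - s / 2))
        * (k ^ 2 * Real.sqrt (2 * Real.pi)) * (s ^ 3)⁻¹
        * Real.exp (k ^ 2 / (2 * s ^ 2) - k / 2) := by
    rw [hBS, hexp_arg, ← hpow]
    ring
  rw [hgoal_eq]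
  refine le_trans hcore (le_of_eq ?_)
  rw [hs2']
  ring
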